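/- Let γ ∈ (0,1). There exists a constant C(γ) > 0 such that for every integer n ≥ 2, every M > 0, and every continuous F : ℝ → ℝ with |F(t)| ≤ M·e^{γ|t|} for all t, the function u_n(t) := [(n + tanh t)/(2n(1−n²))]·e^{−nt}·∫_{−∞}^t (n − tanh s)·e^{ns}·F(s) ds + [(n − tanh t)/(2n(1−n²))]·e^{nt}·∫_t^{∞} (n + tanh s)·e^{−ns}·F(s) ds is well defined (both integrals converge absolutely), is twice differentiable, satisfies u_n''(t) + (2 sech²(t) − n²)·u_n(t) = F(t) for all t ∈ ℝ, and obeys the bound |u_n(t)| ≤ (C(γ)/(n² + 1))·M·e^{γ|t|} for all t ∈ ℝ. -/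

import Mathlib

open MeasureTheory Set

lemma my_abs_tanh_lt_one (t : ℝ) : |Real.tanh t| < 1 := by
  have hc := Real.cosh_pos t
  have h1 : Real.sinh t < Real.cosh t := Real.sinh_lt_cosh t
  have h2 : -Real.cosh t < Real.sinh t := by
    have h3 := Real.sinh_lt_cosh (-t)
    rw [Real.sinh_neg, Real.cosh_neg] at h3
    linarith
  rw [Real.tanh_eq_sinh_div_cosh, abs_div, abs_of_pos hc, div_lt_one hc, abs_lt]
  exact ⟨h2, h1⟩

lemma my_hasDerivAt_tanh (t : ℝ) : HasDerivAt Real.tanh (1 - Real.tanh t ^ 2) t := by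
  have hc := Real.cosh_pos t
  have h := (Real.hasDerivAt_sinh t).div (Real.hasDerivAt_cosh t) hc.ne'
  have heq : (Real.cosh t * Real.cosh t - Real.sinh t * Real.sinh t) / Real.cosh t ^ 2
      = 1 - Real.tanh t ^ 2 := by
    rw [Real.tanh_eq_sinh_div_cosh]
    have := Real.cosh_sq_sub_sinh_sq t
    field_simp
  have : (Real.sinh / Real.cosh) = Real.tanh := by
    funext x; rw [Pi.div_apply, Real.tanh_eq_sinh_div_cosh]
  rw [this, heq] at h
  exact h

lemma my_sech_sq (t : ℝ) : ((Real.cosh t)⁻¹) ^ 2 = 1 - Real.tanh t ^ 2 := by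
  have hc := Real.cosh_pos t
  have := Real.cosh_sq_sub_sinh_sq t
  rw [Real.tanh_eq_sinh_div_cosh]
  field_simp
  linarith

lemma my_continuous_tanh : Continuous Real.tanh := by
  have : Real.tanh = fun x => Real.sinh x / Real.cosh x := by
    funext x; rw [Real.tanh_eq_sinh_div_cosh]
  rw [this]
  exact Real.continuous_sinh.div Real.continuous_cosh fun x => (Real.cosh_pos x).ne'

lemma my_integrableOn_exp_mul_Iic (a t : ℝ) (ha : 0 < a) :
    IntegrableOn (fun s => Real.exp (a * s)) (Iic t) := by
  have hcont : Continuous fun s : ℝ => Real.exp (a * s) :=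
    Real.continuous_exp.comp (continuous_const.mul continuous_id)
  refine integrableOn_Iic_of_intervalIntegral_norm_bounded (Real.exp (a * t) / a) t
    (fun y : ℝ => (hcont.integrableOn_Ioc (a := y) (b := t)))
    Filter.tendsto_id (Filter.Eventually.of_forall fun y => ?_)
  have h1 : (∫ x in y..t, ‖Real.exp (a * x)‖) = (Real.exp (a * t) - Real.exp (a * y)) / a := by
    simp_rw [Real.norm_eq_abs, abs_of_pos (Real.exp_pos _)]
    rw [intervalIntegral.integral_comp_mul_left (fun x => Real.exp x) ha.ne', integral_exp]
    rw [smul_eq_mul]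
    field_simp
  rw [h1]
  gcongr
  linarith [(Real.exp_pos (a * y)).le]

lemma my_integral_exp_mul_Iic (a t : ℝ) (ha : 0 < a) :
    ∫ s in Iic t, Real.exp (a * s) = Real.exp (a * t) / a := by
  refine tendsto_nhds_unique
    (intervalIntegral_tendsto_integral_Iic _ (my_integrableOn_exp_mul_Iic a t ha) Filter.tendsto_id) ?_
  have h1 : ∀ y : ℝ, (∫ x in y..t, Real.exp (a * x)) = (Real.exp (a * t) - Real.exp (a * y)) / a := by
    intro y
    rw [intervalIntegral.integral_comp_mul_left (fun x => Real.exp x) ha.ne', integral_exp]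
    rw [smul_eq_mul]
    field_simp
  simp_rw [h1]
  have : Filter.Tendsto (fun y : ℝ => Real.exp (a * y)) Filter.atBot (nhds 0) :=
    Real.tendsto_exp_atBot.comp (Filter.tendsto_id.const_mul_atBot ha)
  simpa using ((this.const_sub (Real.exp (a * t))).div_const a)

lemma my_integrableOn_exp_neg_Ici (a t : ℝ) (ha : 0 < a) :
    IntegrableOn (fun s => Real.exp (-a * s)) (Ici t) :=
  Iff.mpr integrableOn_Ici_iff_integrableOn_Ioi (exp_neg_integrableOn_Ioi t ha)

lemma my_integral_exp_neg_Ici (a t : ℝ) (ha : 0 < a) :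
    ∫ s in Ici t, Real.exp (-a * s) = Real.exp (-a * t) / a := by
  rw [integral_Ici_eq_integral_Ioi]
  have h1 : (fun s : ℝ => Real.exp (-a * s)) = fun s : ℝ => (fun y : ℝ => Real.exp (a * y)) (-s) := by
    funext s; ring_nf
  rw [h1, integral_comp_neg_Ioi (f := fun y : ℝ => Real.exp (a * y)),
    my_integral_exp_mul_Iic a (-t) ha]
  ring_nf

lemma my_integral_Ici_sub_Ici (f : ℝ → ℝ) (a b : ℝ) (ha : IntegrableOn f (Ici a))
    (hb : IntegrableOn f (Ici b)) :
    (∫ x in Ici a, f x) - ∫ x in Ici b, f x = ∫ x in a..b, f x := by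
  wlog hab : a ≤ b generalizing a b
  · rw [← neg_sub, this b a hb ha (le_of_not_ge hab), ← intervalIntegral.integral_symm]
  have hdisj : Disjoint (Ico a b) (Ici b) :=
    (Set.Iio_disjoint_Ici le_rfl).mono_left Set.Ico_subset_Iio_self
  have hunion : Ico a b ∪ Ici b = Ici a := Set.Ico_union_Ici_eq_Ici hab
  have hsplit : (∫ x in Ici a, f x) = (∫ x in Ico a b, f x) + ∫ x in Ici b, f x := by
    rw [← hunion]
    exact setIntegral_union hdisj measurableSet_Ici
      (ha.mono_set (by rw [← hunion]; exact Set.subset_union_left)) hb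
  rw [hsplit, intervalIntegral.integral_of_le hab, integral_Ico_eq_integral_Ioo,
    integral_Ioc_eq_integral_Ioo]
  ring

set_option maxHeartbeats 1000000 in
/-- The decaying solutions of the `n`-th Fourier-mode ODE `u'' + (2 sech² t − n²) u = F`
on the catenoidal cylinder, for `n ≥ 2` and inhomogeneous term of growth `M e^{γ|t|}`
with `γ ∈ (0,1)`: the explicit variation-of-parameters formula is well defined (both
integrals converge absolutely), solves the equation, and obeys the weighted bound
`|uₙ(t)| ≤ (C(γ)/(n²+1)) M e^{γ|t|}`. -/
theorem fourier_mode_ode_solution (γ : ℝ) (hγ : γ ∈ Set.Ioo (0:ℝ) 1) :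
    ∃ C : ℝ, 0 < C ∧
      ∀ (n : ℕ), 2 ≤ n → ∀ (M : ℝ), 0 < M → ∀ (F : ℝ → ℝ), Continuous F →
        (∀ t : ℝ, |F t| ≤ M * Real.exp (γ * |t|)) →
        let u : ℝ → ℝ := fun t =>
          ((n + Real.tanh t) / (2 * n * (1 - (n:ℝ) ^ 2))) * Real.exp (-(n:ℝ) * t) *
              (∫ s in Set.Iic t, ((n:ℝ) - Real.tanh s) * Real.exp ((n:ℝ) * s) * F s) +
            ((n - Real.tanh t) / (2 * n * (1 - (n:ℝ) ^ 2))) * Real.exp ((n:ℝ) * t) *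
              (∫ s in Set.Ici t, ((n:ℝ) + Real.tanh s) * Real.exp (-(n:ℝ) * s) * F s)
        (∀ t : ℝ, IntegrableOn
            (fun s => ((n:ℝ) - Real.tanh s) * Real.exp ((n:ℝ) * s) * F s) (Set.Iic t)) ∧
          (∀ t : ℝ, IntegrableOn
            (fun s => ((n:ℝ) + Real.tanh s) * Real.exp (-(n:ℝ) * s) * F s) (Set.Ici t)) ∧
          (∀ t, DifferentiableAt ℝ u t) ∧
          (∀ t, DifferentiableAt ℝ (deriv u) t) ∧
          (∀ t, deriv (deriv u) t + (2 * ((Real.cosh t)⁻¹) ^ 2 - (n:ℝ) ^ 2) * u t = F t) ∧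
          (∀ t, |u t| ≤ C / ((n:ℝ) ^ 2 + 1) * M * Real.exp (γ * |t|)) := by
  obtain ⟨hγ0, hγ1⟩ := hγ
  refine ⟨16, by norm_num, ?_⟩
  intro n hn M hM F hF hFb
  intro u
  have hn2 : (2:ℝ) ≤ (n:ℝ) := by exact_mod_cast hn
  have hnγ : 0 < (n:ℝ) - γ := by linarith
  set g : ℝ → ℝ := fun s => ((n:ℝ) - Real.tanh s) * Real.exp ((n:ℝ) * s) * F s with hgdef
  set h : ℝ → ℝ := fun s => ((n:ℝ) + Real.tanh s) * Real.exp (-(n:ℝ) * s) * F s with hhdef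
  have hgcont : Continuous g :=
    ((continuous_const.sub my_continuous_tanh).mul
      (Real.continuous_exp.comp (continuous_const.mul continuous_id))).mul hF
  have hhcont : Continuous h :=
    ((continuous_const.add my_continuous_tanh).mul
      (Real.continuous_exp.comp (continuous_const.mul continuous_id))).mul hF
  have habs : ∀ s : ℝ, |Real.tanh s| ≤ 1 := fun s => (my_abs_tanh_lt_one s).le
  -- pointwise bounds on the integrands
  have hgbd : ∀ t s : ℝ, s ≤ t →
      |g s| ≤ (((n:ℝ)+1) * M * Real.exp (γ*|t| + γ*t)) * Real.exp (((n:ℝ)-γ)*s) := by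
    intro t s hs
    have e1 : |g s| = |(n:ℝ) - Real.tanh s| * Real.exp ((n:ℝ)*s) * |F s| := by
      rw [hgdef, abs_mul, abs_mul, abs_of_pos (Real.exp_pos _)]
    have e2 : |(n:ℝ) - Real.tanh s| ≤ (n:ℝ)+1 := by
      refine (abs_sub _ _).trans ?_
      rw [abs_of_nonneg (by linarith : (0:ℝ) ≤ (n:ℝ))]
      linarith [habs s]
    have e3 : Real.exp ((n:ℝ)*s) * Real.exp (γ*|s|)
        ≤ Real.exp (γ*|t| + γ*t) * Real.exp (((n:ℝ)-γ)*s) := by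
      rw [← Real.exp_add, ← Real.exp_add]
      apply Real.exp_le_exp.mpr
      have habs2 : |s| ≤ |t| + (t - s) := by
        rcases abs_cases s with h1|h1 <;> rcases abs_cases t with h2|h2 <;> linarith
      nlinarith [mul_le_mul_of_nonneg_left habs2 hγ0.le]
    calc |g s| = |(n:ℝ) - Real.tanh s| * Real.exp ((n:ℝ)*s) * |F s| := e1
      _ ≤ (((n:ℝ)+1) * Real.exp ((n:ℝ)*s)) * (M * Real.exp (γ*|s|)) := by
          have := hFb s
          have h4 : (0:ℝ) ≤ Real.exp ((n:ℝ)*s) := (Real.exp_pos _).le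
          exact mul_le_mul (mul_le_mul_of_nonneg_right e2 h4) this (abs_nonneg _)
            (by positivity)
      _ = ((n:ℝ)+1) * M * (Real.exp ((n:ℝ)*s) * Real.exp (γ*|s|)) := by ring
      _ ≤ ((n:ℝ)+1) * M * (Real.exp (γ*|t| + γ*t) * Real.exp (((n:ℝ)-γ)*s)) := by
          have hnm : (0:ℝ) ≤ ((n:ℝ)+1) * M := by nlinarith
          exact mul_le_mul_of_nonneg_left e3 hnm
      _ = (((n:ℝ)+1) * M * Real.exp (γ*|t| + γ*t)) * Real.exp (((n:ℝ)-γ)*s) := by ring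
  have hhbd : ∀ t s : ℝ, t ≤ s →
      |h s| ≤ (((n:ℝ)+1) * M * Real.exp (γ*|t| - γ*t)) * Real.exp (-((n:ℝ)-γ)*s) := by
    intro t s hs
    have e1 : |h s| = |(n:ℝ) + Real.tanh s| * Real.exp (-(n:ℝ)*s) * |F s| := by
      rw [hhdef, abs_mul, abs_mul, abs_of_pos (Real.exp_pos _)]
    have e2 : |(n:ℝ) + Real.tanh s| ≤ (n:ℝ)+1 := by
      refine (abs_add_le _ _).trans ?_
      rw [abs_of_nonneg (by linarith : (0:ℝ) ≤ (n:ℝ))]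
      linarith [habs s]
    have e3 : Real.exp (-(n:ℝ)*s) * Real.exp (γ*|s|)
        ≤ Real.exp (γ*|t| - γ*t) * Real.exp (-((n:ℝ)-γ)*s) := by
      rw [← Real.exp_add, ← Real.exp_add]
      apply Real.exp_le_exp.mpr
      have habs2 : |s| ≤ |t| + (s - t) := by
        rcases abs_cases s with h1|h1 <;> rcases abs_cases t with h2|h2 <;> linarith
      nlinarith [mul_le_mul_of_nonneg_left habs2 hγ0.le]
    calc |h s| = |(n:ℝ) + Real.tanh s| * Real.exp (-(n:ℝ)*s) * |F s| := e1
      _ ≤ (((n:ℝ)+1) * Real.exp (-(n:ℝ)*s)) * (M * Real.exp (γ*|s|)) := by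
          have := hFb s
          have h4 : (0:ℝ) ≤ Real.exp (-(n:ℝ)*s) := (Real.exp_pos _).le
          exact mul_le_mul (mul_le_mul_of_nonneg_right e2 h4) this (abs_nonneg _)
            (by positivity)
      _ = ((n:ℝ)+1) * M * (Real.exp (-(n:ℝ)*s) * Real.exp (γ*|s|)) := by ring
      _ ≤ ((n:ℝ)+1) * M * (Real.exp (γ*|t| - γ*t) * Real.exp (-((n:ℝ)-γ)*s)) := by
          have hnm : (0:ℝ) ≤ ((n:ℝ)+1) * M := by nlinarith
          exact mul_le_mul_of_nonneg_left e3 hnm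
      _ = (((n:ℝ)+1) * M * Real.exp (γ*|t| - γ*t)) * Real.exp (-((n:ℝ)-γ)*s) := by ring
  -- integrability
  have hgint : ∀ t : ℝ, IntegrableOn g (Set.Iic t) := by
    intro t
    refine Integrable.mono'
      ((my_integrableOn_exp_mul_Iic ((n:ℝ)-γ) t hnγ).const_mul
        (((n:ℝ)+1) * M * Real.exp (γ*|t| + γ*t)))
      hgcont.aestronglyMeasurable.restrict ?_
    filter_upwards [ae_restrict_mem measurableSet_Iic] with s hs
    simpa using hgbd t s hs
  have hhint : ∀ t : ℝ, IntegrableOn h (Set.Ici t) := by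
    intro t
    refine Integrable.mono'
      ((my_integrableOn_exp_neg_Ici ((n:ℝ)-γ) t hnγ).const_mul
        (((n:ℝ)+1) * M * Real.exp (γ*|t| - γ*t)))
      hhcont.aestronglyMeasurable.restrict ?_
    filter_upwards [ae_restrict_mem measurableSet_Ici] with s hs
    simpa using hhbd t s hs
  -- the integral functions and their derivatives
  set I₁ : ℝ → ℝ := fun x => ∫ s in Set.Iic x, g s with hI1def
  set I₂ : ℝ → ℝ := fun x => ∫ s in Set.Ici x, h s with hI2def
  have hI1deriv : ∀ t : ℝ, HasDerivAt I₁ (g t) t := by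
    intro t
    have heq : I₁ = fun x => (∫ s in Set.Iic (0:ℝ), g s) + ∫ s in (0:ℝ)..x, g s := by
      funext x
      rw [hI1def]
      rw [← intervalIntegral.integral_Iic_sub_Iic (hgint 0) (hgint x)]
      ring
    rw [heq]
    exact (intervalIntegral.integral_hasDerivAt_right (hgcont.intervalIntegrable 0 t)
      (hgcont.stronglyMeasurableAtFilter _ _) hgcont.continuousAt).const_add _
  have hI2deriv : ∀ t : ℝ, HasDerivAt I₂ (-(h t)) t := by
    intro t
    have heq : I₂ = fun x => (∫ s in Set.Ici (0:ℝ), h s) - ∫ s in (0:ℝ)..x, h s := by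
      funext x
      rw [hI2def]
      rw [← my_integral_Ici_sub_Ici h 0 x (hhint 0) (hhint x)]
      ring
    rw [heq]
    exact (intervalIntegral.integral_hasDerivAt_right (hhcont.intervalIntegrable 0 t)
      (hhcont.stronglyMeasurableAtFilter _ _) hhcont.continuousAt).const_sub _
  set D : ℝ := 2 * (n:ℝ) * (1 - (n:ℝ)^2) with hDdef
  have hDneg : D < 0 := by nlinarith
  have hD : D ≠ 0 := ne_of_lt hDneg
  have hu : ∀ t : ℝ, u t = ((n:ℝ) + Real.tanh t)/D * Real.exp (-(n:ℝ)*t) * I₁ t +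
      ((n:ℝ) - Real.tanh t)/D * Real.exp ((n:ℝ)*t) * I₂ t := fun t => rfl
  set v1 : ℝ → ℝ := fun t =>
    (1 - Real.tanh t^2 - (n:ℝ)^2 - (n:ℝ)*Real.tanh t)/D * Real.exp (-(n:ℝ)*t) * I₁ t +
    ((n:ℝ)^2 - (n:ℝ)*Real.tanh t - 1 + Real.tanh t^2)/D * Real.exp ((n:ℝ)*t) * I₂ t with hv1def
  have hu1 : ∀ t : ℝ, HasDerivAt u (v1 t) t := by
    intro t
    have hwd := my_hasDerivAt_tanh t
    have hE1 : HasDerivAt (fun x : ℝ => Real.exp (-(n:ℝ)*x)) (Real.exp (-(n:ℝ)*t) * -(n:ℝ)) t := by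
      simpa using ((hasDerivAt_id t).const_mul (-(n:ℝ))).exp
    have hE2 : HasDerivAt (fun x : ℝ => Real.exp ((n:ℝ)*x)) (Real.exp ((n:ℝ)*t) * (n:ℝ)) t := by
      simpa using ((hasDerivAt_id t).const_mul ((n:ℝ))).exp
    have hA : HasDerivAt (fun x : ℝ => ((n:ℝ) + Real.tanh x)/D) ((1 - Real.tanh t^2)/D) t :=
      (hwd.const_add _).div_const D
    have hB : HasDerivAt (fun x : ℝ => ((n:ℝ) - Real.tanh x)/D) ((-(1 - Real.tanh t^2))/D) t :=
      (hwd.const_sub _).div_const D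
    have hT := ((hA.mul hE1).mul (hI1deriv t)).add ((hB.mul hE2).mul (hI2deriv t))
    have huf : u = fun t => ((n:ℝ) + Real.tanh t)/D * Real.exp (-(n:ℝ)*t) * I₁ t +
      ((n:ℝ) - Real.tanh t)/D * Real.exp ((n:ℝ)*t) * I₂ t := funext hu
    rw [huf]
    refine hT.congr_deriv (Eq.symm ?_)
    rw [hv1def, hgdef, hhdef]
    simp only [Pi.mul_apply, Pi.add_apply, Pi.sub_apply]
    ring
  have hu2 : ∀ t : ℝ, HasDerivAt v1 (F t - (2*(1 - Real.tanh t^2) - (n:ℝ)^2) * u t) t := by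
    intro t
    have hwd := my_hasDerivAt_tanh t
    have hE1 : HasDerivAt (fun x : ℝ => Real.exp (-(n:ℝ)*x)) (Real.exp (-(n:ℝ)*t) * -(n:ℝ)) t := by
      simpa using ((hasDerivAt_id t).const_mul (-(n:ℝ))).exp
    have hE2 : HasDerivAt (fun x : ℝ => Real.exp ((n:ℝ)*x)) (Real.exp ((n:ℝ)*t) * (n:ℝ)) t := by
      simpa using ((hasDerivAt_id t).const_mul ((n:ℝ))).exp
    have h2 : HasDerivAt (fun x : ℝ => Real.tanh x ^ 2)
        (2 * Real.tanh t * (1 - Real.tanh t^2)) t := by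
      have h2' := hwd.pow 2
      simp at h2'
      exact h2'
    have hA := (((h2.const_sub (1:ℝ)).sub_const ((n:ℝ)^2)).sub (hwd.const_mul (n:ℝ))).div_const D
    have hB := ((((hwd.const_mul (n:ℝ)).const_sub ((n:ℝ)^2)).sub_const (1:ℝ)).add h2).div_const D
    have hT := ((hA.mul hE1).mul (hI1deriv t)).add ((hB.mul hE2).mul (hI2deriv t))
    have hv1f : v1 = fun x => ((1 - Real.tanh x^2) - (n:ℝ)^2 - (n:ℝ)*Real.tanh x)/D *
        Real.exp (-(n:ℝ)*x) * I₁ x +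
        (((n:ℝ)^2 - (n:ℝ)*Real.tanh x - 1) + Real.tanh x^2)/D * Real.exp ((n:ℝ)*x) * I₂ x := by
      funext x; rw [hv1def]
    rw [hv1f]
    refine hT.congr_deriv (Eq.symm ?_)
    rw [hgdef, hhdef, hu t]
    simp only [Pi.mul_apply, Pi.add_apply, Pi.sub_apply]
    have hexp : Real.exp (-(n:ℝ)*t) * Real.exp ((n:ℝ)*t) = 1 := by
      rw [← Real.exp_add]; norm_num
    have hDD : D * D⁻¹ = 1 := mul_inv_cancel₀ hD
    linear_combination (-(F t) * (D / D)) * hexp - F t * hDD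
  have hderivu : deriv u = v1 := funext fun x => (hu1 x).deriv
  refine ⟨hgint, hhint, fun t => (hu1 t).differentiableAt, fun t => ?_, fun t => ?_, ?_⟩
  · rw [hderivu]; exact (hu2 t).differentiableAt
  · rw [hderivu, (hu2 t).deriv, my_sech_sq t]; ring
  · intro t
    have hDpos : 0 < |D| := abs_pos.mpr hD
    have hDabs : |D| = 2*(n:ℝ)*((n:ℝ)^2-1) := by
      rw [abs_of_neg hDneg, hDdef]; ring
    have hI1bd : |I₁ t| ≤ (((n:ℝ)+1) * M * Real.exp (γ*|t| + γ*t)) *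
        (Real.exp (((n:ℝ)-γ)*t) / ((n:ℝ)-γ)) := by
      have hint := (my_integrableOn_exp_mul_Iic ((n:ℝ)-γ) t hnγ).const_mul
        (((n:ℝ)+1) * M * Real.exp (γ*|t| + γ*t))
      have hae : ∀ᵐ s ∂(volume.restrict (Set.Iic t)), ‖g s‖ ≤
          (((n:ℝ)+1) * M * Real.exp (γ*|t| + γ*t)) * Real.exp (((n:ℝ)-γ)*s) := by
        filter_upwards [ae_restrict_mem measurableSet_Iic] with s hs
        simpa using hgbd t s hs
      have hb := norm_integral_le_of_norm_le hint hae
      calc |I₁ t| = ‖∫ s in Set.Iic t, g s‖ := by rw [hI1def, Real.norm_eq_abs]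
        _ ≤ ∫ s in Set.Iic t, (((n:ℝ)+1) * M * Real.exp (γ*|t| + γ*t)) *
            Real.exp (((n:ℝ)-γ)*s) := hb
        _ = _ := by rw [integral_const_mul, my_integral_exp_mul_Iic ((n:ℝ)-γ) t hnγ]
    have hI2bd : |I₂ t| ≤ (((n:ℝ)+1) * M * Real.exp (γ*|t| - γ*t)) *
        (Real.exp (-((n:ℝ)-γ)*t) / ((n:ℝ)-γ)) := by
      have hint := (my_integrableOn_exp_neg_Ici ((n:ℝ)-γ) t hnγ).const_mul
        (((n:ℝ)+1) * M * Real.exp (γ*|t| - γ*t))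
      have hae : ∀ᵐ s ∂(volume.restrict (Set.Ici t)), ‖h s‖ ≤
          (((n:ℝ)+1) * M * Real.exp (γ*|t| - γ*t)) * Real.exp (-((n:ℝ)-γ)*s) := by
        filter_upwards [ae_restrict_mem measurableSet_Ici] with s hs
        simpa using hhbd t s hs
      have hb := norm_integral_le_of_norm_le hint hae
      calc |I₂ t| = ‖∫ s in Set.Ici t, h s‖ := by rw [hI2def, Real.norm_eq_abs]
        _ ≤ ∫ s in Set.Ici t, (((n:ℝ)+1) * M * Real.exp (γ*|t| - γ*t)) *
            Real.exp (-((n:ℝ)-γ)*s) := hb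
        _ = _ := by rw [integral_const_mul, my_integral_exp_neg_Ici ((n:ℝ)-γ) t hnγ]
    have hcol1 : Real.exp (-(n:ℝ)*t) * (Real.exp (γ*|t| + γ*t) * Real.exp (((n:ℝ)-γ)*t))
        = Real.exp (γ*|t|) := by
      rw [← Real.exp_add, ← Real.exp_add]; congr 1; ring
    have hcol2 : Real.exp ((n:ℝ)*t) * (Real.exp (γ*|t| - γ*t) * Real.exp (-((n:ℝ)-γ)*t))
        = Real.exp (γ*|t|) := by
      rw [← Real.exp_add, ← Real.exp_add]; congr 1; ring
    have hAabs : |(n:ℝ) + Real.tanh t| ≤ (n:ℝ)+1 := by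
      refine (abs_add_le _ _).trans ?_
      rw [abs_of_nonneg (by linarith : (0:ℝ) ≤ (n:ℝ))]
      linarith [habs t]
    have hBabs : |(n:ℝ) - Real.tanh t| ≤ (n:ℝ)+1 := by
      refine (abs_sub _ _).trans ?_
      rw [abs_of_nonneg (by linarith : (0:ℝ) ≤ (n:ℝ))]
      linarith [habs t]
    have hterm1 : |((n:ℝ) + Real.tanh t)/D * Real.exp (-(n:ℝ)*t) * I₁ t|
        ≤ ((n:ℝ)+1)^2 * M / |D| / ((n:ℝ)-γ) * Real.exp (γ*|t|) := by
      have e1 : |((n:ℝ) + Real.tanh t)/D * Real.exp (-(n:ℝ)*t) * I₁ t|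
          = |(n:ℝ) + Real.tanh t| / |D| * Real.exp (-(n:ℝ)*t) * |I₁ t| := by
        rw [abs_mul, abs_mul, abs_div, abs_of_pos (Real.exp_pos _)]
      rw [e1]
      calc |(n:ℝ) + Real.tanh t| / |D| * Real.exp (-(n:ℝ)*t) * |I₁ t|
          ≤ (((n:ℝ)+1) / |D|) * Real.exp (-(n:ℝ)*t) *
            ((((n:ℝ)+1) * M * Real.exp (γ*|t| + γ*t)) * (Real.exp (((n:ℝ)-γ)*t) / ((n:ℝ)-γ))) := by
            refine mul_le_mul (mul_le_mul_of_nonneg_right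
              (div_le_div_of_nonneg_right hAabs hDpos.le) (Real.exp_pos _).le) hI1bd
              (abs_nonneg _) (by positivity)
        _ = ((n:ℝ)+1)^2 * M / |D| / ((n:ℝ)-γ) *
            (Real.exp (-(n:ℝ)*t) * (Real.exp (γ*|t| + γ*t) * Real.exp (((n:ℝ)-γ)*t))) := by
            ring
        _ = ((n:ℝ)+1)^2 * M / |D| / ((n:ℝ)-γ) * Real.exp (γ*|t|) := by rw [hcol1]
    have hterm2 : |((n:ℝ) - Real.tanh t)/D * Real.exp ((n:ℝ)*t) * I₂ t|
        ≤ ((n:ℝ)+1)^2 * M / |D| / ((n:ℝ)-γ) * Real.exp (γ*|t|) := by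
      have e1 : |((n:ℝ) - Real.tanh t)/D * Real.exp ((n:ℝ)*t) * I₂ t|
          = |(n:ℝ) - Real.tanh t| / |D| * Real.exp ((n:ℝ)*t) * |I₂ t| := by
        rw [abs_mul, abs_mul, abs_div, abs_of_pos (Real.exp_pos _)]
      rw [e1]
      calc |(n:ℝ) - Real.tanh t| / |D| * Real.exp ((n:ℝ)*t) * |I₂ t|
          ≤ (((n:ℝ)+1) / |D|) * Real.exp ((n:ℝ)*t) *
            ((((n:ℝ)+1) * M * Real.exp (γ*|t| - γ*t)) * (Real.exp (-((n:ℝ)-γ)*t) / ((n:ℝ)-γ))) := by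
            refine mul_le_mul (mul_le_mul_of_nonneg_right
              (div_le_div_of_nonneg_right hBabs hDpos.le) (Real.exp_pos _).le) hI2bd
              (abs_nonneg _) (by positivity)
        _ = ((n:ℝ)+1)^2 * M / |D| / ((n:ℝ)-γ) *
            (Real.exp ((n:ℝ)*t) * (Real.exp (γ*|t| - γ*t) * Real.exp (-((n:ℝ)-γ)*t))) := by
            ring
        _ = ((n:ℝ)+1)^2 * M / |D| / ((n:ℝ)-γ) * Real.exp (γ*|t|) := by rw [hcol2]
    have key : ((n:ℝ)+1)*((n:ℝ)^2+1) ≤ 16*(n:ℝ)*((n:ℝ)-1)^2 := by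
      nlinarith [mul_nonneg (mul_nonneg (sub_nonneg.mpr hn2) (sub_nonneg.mpr hn2))
        (sub_nonneg.mpr hn2), sq_nonneg ((n:ℝ)-2), hn2]
    have hsq1 : (1:ℝ) < (n:ℝ)^2 := by nlinarith
    have hp2 : (0:ℝ) < 2*(n:ℝ)*((n:ℝ)^2-1)*((n:ℝ)-γ) :=
      mul_pos (mul_pos (by linarith : (0:ℝ) < 2*(n:ℝ)) (by linarith : (0:ℝ) < (n:ℝ)^2-1)) hnγ
    have hp3 : (0:ℝ) < (n:ℝ)^2+1 := by positivity
    have hscalar : 2 * ((n:ℝ)+1)^2 / |D| / ((n:ℝ)-γ) ≤ 16 / ((n:ℝ)^2+1) := by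
      rw [hDabs, div_div, div_le_div_iff₀ hp2 hp3]
      have key2 : 2*((n:ℝ)+1)^2*((n:ℝ)^2+1)
          ≤ 16*(2*(n:ℝ)*((n:ℝ)^2-1)*((n:ℝ)-1)) := by
        nlinarith [mul_le_mul_of_nonneg_left key (show (0:ℝ) ≤ 2*((n:ℝ)+1) by linarith)]
      have key3 : 16*(2*(n:ℝ)*((n:ℝ)^2-1)*((n:ℝ)-1))
          ≤ 16*(2*(n:ℝ)*((n:ℝ)^2-1)*((n:ℝ)-γ)) := by
        have h0 : (0:ℝ) ≤ 16*(2*(n:ℝ)*((n:ℝ)^2-1)) := by nlinarith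
        nlinarith [mul_le_mul_of_nonneg_left (show (n:ℝ)-1 ≤ (n:ℝ)-γ by linarith) h0]
      calc 2*((n:ℝ)+1)^2*((n:ℝ)^2+1) ≤ 16*(2*(n:ℝ)*((n:ℝ)^2-1)*((n:ℝ)-1)) := key2
        _ ≤ 16*(2*(n:ℝ)*((n:ℝ)^2-1)*((n:ℝ)-γ)) := key3
        _ = 16*(2*(n:ℝ)*((n:ℝ)^2-1)*((n:ℝ)-γ)) := rfl
    calc |u t| ≤ |((n:ℝ) + Real.tanh t)/D * Real.exp (-(n:ℝ)*t) * I₁ t|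
          + |((n:ℝ) - Real.tanh t)/D * Real.exp ((n:ℝ)*t) * I₂ t| := by
          rw [hu t]; exact abs_add_le _ _
      _ ≤ 2 * ((n:ℝ)+1)^2 / |D| / ((n:ℝ)-γ) * (M * Real.exp (γ*|t|)) := by
          calc _ ≤ ((n:ℝ)+1)^2 * M / |D| / ((n:ℝ)-γ) * Real.exp (γ*|t|)
              + ((n:ℝ)+1)^2 * M / |D| / ((n:ℝ)-γ) * Real.exp (γ*|t|) := add_le_add hterm1 hterm2
            _ = 2 * ((n:ℝ)+1)^2 / |D| / ((n:ℝ)-γ) * (M * Real.exp (γ*|t|)) := by ring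
      _ ≤ 16 / ((n:ℝ)^2+1) * (M * Real.exp (γ*|t|)) :=
          mul_le_mul_of_nonneg_right hscalar (by positivity)
      _ = 16 / ((n:ℝ)^2+1) * M * Real.exp (γ*|t|) := by ring
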